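/- Model #4 (steps {(0,1),(1,0),(1,−1),(−1,0)}), which has an infinite group, is decoupled with G(y) = −y² + y/t + 1/y: for every field k and all t, x, y₀, y₁ ∈ k with t ≠ 0, y₀ ≠ 0, y₁ ≠ 0, if K(x,y₀) = 0 and K(x,y₁) = 0, where K(x,y) = t(xy² + x²y + x² + y) − xy, then x(y₀ − y₁) = G(y₀) − G(y₁). -/

import Mathlib

/-- Model #4 (steps `{(0,1),(1,0),(1,-1),(-1,0)}`) is decoupled with
`G(y) = -y² + y/t + 1/y`: if `y₀, y₁` are two roots of the kernel `K(x,·) = 0`,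
then `x(y₀ - y₁) = G(y₀) - G(y₁)`. -/
theorem model4_decoupled {k : Type*} [Field k] (t x y₀ y₁ : k)
    (ht : t ≠ 0) (hy₀ : y₀ ≠ 0) (hy₁ : y₁ ≠ 0)
    (hK₀ : t * (x * y₀ ^ 2 + x ^ 2 * y₀ + x ^ 2 + y₀) - x * y₀ = 0)
    (hK₁ : t * (x * y₁ ^ 2 + x ^ 2 * y₁ + x ^ 2 + y₁) - x * y₁ = 0) :
    x * (y₀ - y₁) =
      (-y₀ ^ 2 + y₀ / t + 1 / y₀) - (-y₁ ^ 2 + y₁ / t + 1 / y₁) := by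
  -- x ≠ 0: otherwise the kernel equation forces y₀ = 0
  have hx : x ≠ 0 := by
    rintro rfl
    apply hy₀
    have : t * y₀ = 0 := by linear_combination hK₀
    exact (mul_eq_zero.mp this).resolve_left ht
  rcases eq_or_ne y₀ y₁ with rfl | hne
  · ring
  -- difference of the two kernel equations, factored
  have hdiff : (y₀ - y₁) * (t * x * (y₀ + y₁) + t * x ^ 2 + t - x) = 0 := by
    linear_combination hK₀ - hK₁
  have hs : t * x * (y₀ + y₁) + t * x ^ 2 + t - x = 0 :=
    (mul_eq_zero.mp hdiff).resolve_left (sub_ne_zero_of_ne hne)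
  -- Vieta product: y₀ * y₁ = x
  have hp : t * x * (x - y₀ * y₁) = 0 := by
    linear_combination hK₀ - y₀ * hs
  have hP : y₀ * y₁ - x = 0 := by
    have := (mul_eq_zero.mp hp).resolve_left (mul_ne_zero ht hx)
    linear_combination -this
  field_simp
  linear_combination (t * y₀ * y₁ * (y₀ - y₁) + t * (y₁ - y₀) * (y₀ * y₁ - 1)) * hs +
    (t * y₀ * y₁ * (y₀ - y₁) * (t * x + t * (y₀ + y₁) - 1)) * hP +
    (t ^ 2 * (x * y₀ * y₁ ^ 2 - x * y₁ - x * y₀ ^ 2 * y₁ + x * y₀ + y₀ * y₁ ^ 3 - y₁ ^ 2 - y₀ ^ 3 * y₁ + y₀ ^ 2) +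
      t * (y₁ + y₀ ^ 2 * y₁ - y₀ * y₁ ^ 2 - y₀)) * hP +
    ((y₁ - y₀) * (t - 1)) * hs + ((y₁ - y₀) * (t - 1) * (t * x + t * (y₀ + y₁) - 1)) * hP
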